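/- arXiv:2302.01198 — 8 statements merged into one kernel-verified Lean document; each statement's English description precedes it below -/
import Mathlib

section
/- Let α be a finite nonempty type and n a natural number. Let μ be a probability mass function (PMF) on Matrix (Fin n) (Fin n) α, and let ν be the PMF of the random matrix π • b obtained by sampling π uniformly from the permutations of Fin n and b from μ independently (i.e., ν is the pushforward of the product of the uniform PMF on Equiv.Perm (Fin n) with μ under the map (π, b) ↦ π • b). Then for every matrix a : Matrix (Fin n) (Fin n) α and every permutation σ of Fin n, ν a = ν (σ • a); i.e., the resulting distribution is finitely (jointly) exchangeable: isomorphic graphs receive equal probability. -/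
/-- The action of a permutation on an adjacency matrix: relabel node identifiers,
`(π • a) i j = a (π⁻¹ i) (π⁻¹ j)`. -/
def permSMul {α : Type*} {n : ℕ} (π : Equiv.Perm (Fin n)) (a : Matrix (Fin n) (Fin n) α) :
    Matrix (Fin n) (Fin n) α :=
  fun i j => a (π⁻¹ i) (π⁻¹ j)

lemma permSMul_mul {α : Type*} {n : ℕ} (σ τ : Equiv.Perm (Fin n))
    (a : Matrix (Fin n) (Fin n) α) :
    permSMul (σ * τ) a = permSMul σ (permSMul τ a) := by
  funext i j
  simp [permSMul, Equiv.Perm.mul_apply]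

lemma permSMul_eq_iff {α : Type*} {n : ℕ} (σ π : Equiv.Perm (Fin n))
    (a b : Matrix (Fin n) (Fin n) α) :
    permSMul σ a = permSMul π b ↔ a = permSMul (σ⁻¹ * π) b := by
  rw [permSMul_mul]
  constructor
  · intro h
    funext i j
    have := congrFun (congrFun h (σ i)) (σ j)
    simpa [permSMul] using this
  · intro h
    subst h
    funext i j
    simp [permSMul]

/-- If `ν` is the law of `π • b` where `π` is sampled uniformly from the permutations of
`Fin n` and `b` is sampled from `μ` independently, then `ν` is finitely (jointly)
exchangeable: isomorphic graphs receive equal probability. -/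
theorem stmt0 {α : Type*} [Fintype α] [Nonempty α] {n : ℕ}
    (μ : PMF (Matrix (Fin n) (Fin n) α))
    (prodPMF : PMF (Equiv.Perm (Fin n) × Matrix (Fin n) (Fin n) α))
    (hprod : prodPMF =
      (PMF.uniformOfFintype (Equiv.Perm (Fin n))).bind (fun π => μ.map (fun b => (π, b))))
    (ν : PMF (Matrix (Fin n) (Fin n) α))
    (hν : ν = prodPMF.map (fun pb => permSMul pb.1 pb.2)) :
    ∀ (a : Matrix (Fin n) (Fin n) α) (σ : Equiv.Perm (Fin n)),
      ν a = ν (permSMul σ a) := by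
  intro a σ
  subst hprod hν
  have hrw : ((PMF.uniformOfFintype (Equiv.Perm (Fin n))).bind
      (fun π => μ.map (fun b => (π, b)))).map (fun pb => permSMul pb.1 pb.2) =
      (PMF.uniformOfFintype (Equiv.Perm (Fin n))).bind (fun π => μ.map (permSMul π)) := by
    rw [PMF.map_bind]
    congr 1
    funext π
    rw [PMF.map_comp]
    rfl
  rw [hrw]
  simp only [PMF.bind_apply, PMF.uniformOfFintype_apply]
  rw [← (Equiv.mulLeft σ⁻¹).tsum_eq
    (fun π => ((Fintype.card (Equiv.Perm (Fin n)) : ENNReal))⁻¹ * (μ.map (permSMul π)) a)]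
  congr 1
  funext π
  congr 1
  simp only [PMF.map_apply]
  congr 1
  funext b
  have : a = permSMul (Equiv.mulLeft σ⁻¹ π) b ↔ permSMul σ a = permSMul π b := by
    simpa [Equiv.coe_mulLeft] using (permSMul_eq_iff σ π a b).symm
  simp only [Equiv.coe_mulLeft] at this ⊢
  by_cases h : permSMul σ a = permSMul π b
  · exact (if_pos (this.mpr h)).trans (if_pos h).symm
  · exact (if_neg (fun hh => h (this.mp hh))).trans (if_neg h).symm
end

section
/- Let M : Matrix (Fin n) (Fin n) ℝ be any real matrix, π a permutation of Fin n, and P_π its permutation matrix. If P_π * M = M, then every eigenvector of M with nonzero eigenvalue is fixed by P_π; that is, for all x : Fin n → ℝ and λ : ℝ with λ ≠ 0, x ≠ 0 and M.mulVec x = λ • x, one has P_π.mulVec x = x (equivalently, x (π⁻¹ i) = x i for all i). -/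
/-- The permutation matrix of `π`: `(P_π) i j = 1` if `i = π j` and `0` otherwise. -/
def permMatrix {n : ℕ} (π : Equiv.Perm (Fin n)) : Matrix (Fin n) (Fin n) ℝ :=
  fun i j => if i = π j then 1 else 0

lemma permMatrix_mulVec {n : ℕ} (π : Equiv.Perm (Fin n)) (v : Fin n → ℝ) :
    (permMatrix π).mulVec v = fun i => v (π⁻¹ i) := by
  funext i
  simp only [Matrix.mulVec, dotProduct, permMatrix, ite_mul, one_mul, zero_mul]
  rw [Finset.sum_eq_single (π⁻¹ i)]
  · simp
  · intro b _ hb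
    rw [if_neg]
    intro hib
    exact hb (by simp [hib])
  · simp

/-- If `P_π * M = M`, then every eigenvector of `M` with nonzero eigenvalue is fixed
by `P_π` (equivalently, `x (π⁻¹ i) = x i` for all `i`). -/
theorem stmt2 {n : ℕ} (M : Matrix (Fin n) (Fin n) ℝ) (π : Equiv.Perm (Fin n))
    (h : permMatrix π * M = M) :
    ∀ (x : Fin n → ℝ) (lam : ℝ), lam ≠ 0 → x ≠ 0 → M.mulVec x = lam • x →
      (permMatrix π).mulVec x = x ∧ ∀ i, x (π⁻¹ i) = x i := by
  intro x lam hlam _ hx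
  have key : (permMatrix π).mulVec x = x := by
    have h1 : (permMatrix π).mulVec (M.mulVec x) = M.mulVec x := by
      rw [Matrix.mulVec_mulVec, h]
    rw [hx, Matrix.mulVec_smul] at h1
    have := smul_right_injective (Fin n → ℝ) hlam h1
    exact this
  refine ⟨key, fun i => ?_⟩
  have := congrFun key i
  rwa [permMatrix_mulVec] at this
end

section
/- Let M : Matrix (Fin n) (Fin n) ℝ be a real symmetric matrix, π a permutation of Fin n, and P_π its permutation matrix. If every eigenvector of M with nonzero eigenvalue is fixed by P_π (i.e., for all x ≠ 0 and λ ≠ 0 with M.mulVec x = λ • x one has P_π.mulVec x = x), then P_π * M = M and M * P_π = M. -/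
lemma permMatrix_apply {n : ℕ} (π : Equiv.Perm (Fin n)) (i j : Fin n) :
    permMatrix π i j = if i = π j then 1 else 0 := rfl

lemma mulVec_eq_sum_cols {n : ℕ} (A : Matrix (Fin n) (Fin n) ℝ) (c : Fin n → ℝ) :
    A.mulVec c = ∑ j, c j • (fun i => A i j) := by
  funext i
  simp [Matrix.mulVec, dotProduct, Finset.sum_apply, mul_comm]

/-- If `M` is real symmetric and every eigenvector of `M` with nonzero eigenvalue is
fixed by `P_π`, then `P_π * M = M` and `M * P_π = M`. -/
theorem stmt3 {n : ℕ} (M : Matrix (Fin n) (Fin n) ℝ) (hM : M.IsSymm) (π : Equiv.Perm (Fin n))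
    (h : ∀ (x : Fin n → ℝ) (lam : ℝ), lam ≠ 0 → x ≠ 0 → M.mulVec x = lam • x →
      (permMatrix π).mulVec x = x) :
    permMatrix π * M = M ∧ M * permMatrix π = M := by
  classical
  have hM' : M.IsHermitian := by
    rw [Matrix.IsHermitian, Matrix.conjTranspose_eq_transpose_of_trivial]; exact hM
  have hfix : ∀ i : Fin n, hM'.eigenvalues i ≠ 0 →
      (permMatrix π).mulVec ⇑(hM'.eigenvectorBasis i) = ⇑(hM'.eigenvectorBasis i) :=
    fun i hi => h _ _ hi ((WithLp.ofLp_eq_zero 2).ne.2 <| hM'.eigenvectorBasis.orthonormal.ne_zero i)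
      (hM'.mulVec_eigenvectorBasis i)
  have key : ∀ y : Fin n → ℝ, (permMatrix π).mulVec (M.mulVec y) = M.mulVec y := by
    intro y
    rw [hM'.spectral_theorem, Unitary.conjStarAlgAut_apply, ← Matrix.mulVec_mulVec, ← Matrix.mulVec_mulVec]
    set V := (hM'.eigenvectorUnitary : Matrix (Fin n) (Fin n) ℝ) with hV
    set w := (star V).mulVec y with hw
    have hd : (Matrix.diagonal (RCLike.ofReal ∘ hM'.eigenvalues)).mulVec w
        = fun i => hM'.eigenvalues i * w i := by
      funext i; simp [Matrix.mulVec_diagonal]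
    rw [hd, mulVec_eq_sum_cols V]
    have hlin : ∀ v : Fin n → ℝ, (permMatrix π).mulVec v = (permMatrix π).mulVecLin v :=
      fun _ => rfl
    rw [hlin, map_sum]
    refine Finset.sum_congr rfl fun i _ => ?_
    rw [map_smul, Matrix.mulVecLin_apply]
    by_cases hi : hM'.eigenvalues i = 0
    · simp [hi]
    · congr 1
      have hcol : (fun k => V k i) = ⇑(hM'.eigenvectorBasis i) := by
        funext k; exact hM'.eigenvectorUnitary_apply k i
      rw [hcol]; exact hfix i hi
  have h1 : permMatrix π * M = M := by
    apply Matrix.ext; intro i j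
    have hk := congrFun (key (Pi.single j 1)) i
    rw [Matrix.mulVec_mulVec] at hk
    simpa [Matrix.mulVec_single] using hk
  refine ⟨h1, ?_⟩
  have hπ : ∀ i j, M (π i) j = M i j := by
    intro i j
    have := congrFun (congrFun h1 (π i)) j
    rw [Matrix.mul_apply] at this
    rw [← this]
    rw [Finset.sum_eq_single i]
    · simp [permMatrix_apply]
    · intro k _ hk
      rw [permMatrix_apply, if_neg (fun hh => hk (π.injective hh.symm)), zero_mul]
    · simp
  apply Matrix.ext; intro i j
  rw [Matrix.mul_apply, Finset.sum_eq_single (π j)]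
  · rw [permMatrix_apply, if_pos rfl, mul_one]
    have hs : ∀ a b, M a b = M b a := fun a b => congrFun (congrFun hM b) a
    calc M i (π j) = M (π j) i := hs i (π j)
    _ = M j i := hπ j i
    _ = M i j := hs j i
  · intro k _ hk
    rw [permMatrix_apply, if_neg hk, mul_zero]
  · simp [permMatrix_apply]
end

section
/- Let a : Matrix (Fin n) (Fin n) ℝ be a binary matrix (every entry is 0 or 1), π a permutation of Fin n, and P_π its permutation matrix. Then the following are equivalent: (1) P_π * (a * aᵀ) = a * aᵀ, (a * aᵀ) * P_π = a * aᵀ, P_π * (aᵀ * a) = aᵀ * a, and (aᵀ * a) * P_π = aᵀ * a; (2) for all i and v in Fin n, a i v = a (π i) v and a v i = a v (π i), i.e., every node has exactly the same out- and in-neighborhood as its image under π. -/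
open Matrix

lemma permMatrix_mul_apply {n : ℕ} (π : Equiv.Perm (Fin n)) (M : Matrix (Fin n) (Fin n) ℝ)
    (i j : Fin n) : (permMatrix π * M) i j = M (π⁻¹ i) j := by
  simp only [Matrix.mul_apply, permMatrix]
  have hk : ∀ k : Fin n, (i = π k) ↔ ((π⁻¹ i : Fin n) = k) :=
    fun k => ⟨fun h => by simp [h], fun h => by simp [← h]⟩
  simp only [hk]
  simp

lemma mul_permMatrix_apply {n : ℕ} (π : Equiv.Perm (Fin n)) (M : Matrix (Fin n) (Fin n) ℝ)
    (i j : Fin n) : (M * permMatrix π) i j = M i (π j) := by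
  rw [Matrix.mul_apply]
  simp [permMatrix]

lemma row_eq_of_gram {n : ℕ} (a : Matrix (Fin n) (Fin n) ℝ) (π : Equiv.Perm (Fin n))
    (h1 : permMatrix π * (a * aᵀ) = a * aᵀ) (h2 : (a * aᵀ) * permMatrix π = a * aᵀ)
    (i v : Fin n) : a i v = a (π i) v := by
  have hG : ∀ i j, (a * aᵀ) (π i) j = (a * aᵀ) i j := by
    intro i j
    have := congrFun (congrFun h1 (π i)) j
    rw [permMatrix_mul_apply, (by simp : π⁻¹ (π i) = i)] at this
    exact this.symm
  have hG' : ∀ i j, (a * aᵀ) i (π j) = (a * aᵀ) i j := by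
    intro i j
    have := congrFun (congrFun h2 i) j
    rwa [mul_permMatrix_apply] at this
  have e1 : (a * aᵀ) (π i) (π i) = (a * aᵀ) i (π i) := hG i (π i)
  have e2 : (a * aᵀ) i (π i) = (a * aᵀ) i i := hG' i i
  simp only [Matrix.mul_apply, Matrix.transpose_apply] at e1 e2
  have key : ∑ w : Fin n, (a i w - a (π i) w) ^ 2 = 0 := by
    have expand : ∑ w : Fin n, (a i w - a (π i) w) ^ 2 =
        (∑ w : Fin n, a i w * a i w) - 2 * (∑ w : Fin n, a i w * a (π i) w) +
          ∑ w : Fin n, a (π i) w * a (π i) w := by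
      rw [Finset.mul_sum, ← Finset.sum_sub_distrib, ← Finset.sum_add_distrib]
      apply Finset.sum_congr rfl
      intro w _
      ring
    rw [expand]
    have e1' : ∑ w : Fin n, a (π i) w * a (π i) w = ∑ w : Fin n, a i w * a (π i) w := e1
    have e2' : ∑ w : Fin n, a i w * a (π i) w = ∑ w : Fin n, a i w * a i w := e2
    linarith
  have hz := (Finset.sum_eq_zero_iff_of_nonneg (fun w _ => sq_nonneg _)).mp key v
    (Finset.mem_univ v)
  have := pow_eq_zero_iff (n := 2) (by norm_num) |>.mp hz
  linarith

/-- For a binary adjacency matrix `a`, the permutation matrix `P_π` fixes both Gram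
matrices `a * aᵀ` and `aᵀ * a` (on the left and on the right) if and only if every
node has exactly the same out- and in-neighborhood as its image under `π`. -/
theorem stmt5 {n : ℕ} (a : Matrix (Fin n) (Fin n) ℝ) (ha : ∀ i j, a i j = 0 ∨ a i j = 1)
    (π : Equiv.Perm (Fin n)) :
    (permMatrix π * (a * aᵀ) = a * aᵀ ∧ (a * aᵀ) * permMatrix π = a * aᵀ ∧
      permMatrix π * (aᵀ * a) = aᵀ * a ∧ (aᵀ * a) * permMatrix π = aᵀ * a) ↔
    (∀ i v, a i v = a (π i) v ∧ a v i = a v (π i)) := by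
  constructor
  · rintro ⟨h1, h2, h3, h4⟩
    intro i v
    refine ⟨row_eq_of_gram a π h1 h2 i v, ?_⟩
    have h3' : permMatrix π * (aᵀ * aᵀᵀ) = aᵀ * aᵀᵀ := by rwa [Matrix.transpose_transpose]
    have h4' : (aᵀ * aᵀᵀ) * permMatrix π = aᵀ * aᵀᵀ := by rwa [Matrix.transpose_transpose]
    exact row_eq_of_gram aᵀ π h3' h4' i v
  · intro h
    have hr : ∀ i v, a (π⁻¹ i) v = a i v := by
      intro i v
      have := (h (π⁻¹ i) v).1
      rwa [(by simp : π (π⁻¹ i) = i)] at this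
    have hc : ∀ i v, a v (π⁻¹ i) = a v i := by
      intro i v
      have := (h (π⁻¹ i) v).2
      rwa [(by simp : π (π⁻¹ i) = i)] at this
    refine ⟨?_, ?_, ?_, ?_⟩ <;> ext i j
    · rw [permMatrix_mul_apply]
      simp only [Matrix.mul_apply, Matrix.transpose_apply]
      exact Finset.sum_congr rfl fun w _ => by rw [hr]
    · rw [mul_permMatrix_apply]
      simp only [Matrix.mul_apply, Matrix.transpose_apply]
      exact Finset.sum_congr rfl fun w _ => by rw [← (h j w).1]
    · rw [permMatrix_mul_apply]
      simp only [Matrix.mul_apply, Matrix.transpose_apply]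
      exact Finset.sum_congr rfl fun w _ => by rw [hc]
    · rw [mul_permMatrix_apply]
      simp only [Matrix.mul_apply, Matrix.transpose_apply]
      exact Finset.sum_congr rfl fun w _ => by rw [← (h j w).2]
end

section
/- Let α be a type, a : Matrix (Fin n) (Fin n) α, and π a permutation of Fin n such that for all i and v in Fin n, a i v = a (π i) v and a v i = a v (π i). Then π is an automorphism of a: for all k and l in Fin n, a (π k) (π l) = a k l (equivalently, π • a = a). -/
/-- If `π` maps every node to a node with identical out- and in-neighborhood, then `π`
is an automorphism of `a`: `a (π k) (π l) = a k l` for all `k, l` (equivalently,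
`π • a = a`). -/
theorem stmt6 {α : Type*} {n : ℕ} (a : Matrix (Fin n) (Fin n) α) (π : Equiv.Perm (Fin n))
    (h : ∀ i v, a i v = a (π i) v ∧ a v i = a v (π i)) :
    (∀ k l, a (π k) (π l) = a k l) ∧ permSMul π a = a := by
  have key : ∀ k l, a (π k) (π l) = a k l := by
    intro k l
    rw [← (h k (π l)).1, ← (h l k).2]
  refine ⟨key, ?_⟩
  funext i j
  have := key (π⁻¹ i) (π⁻¹ j)
  simpa [permSMul] using this.symm
end

section
/- Let a : Matrix (Fin n) (Fin n) ℝ and let i, j ∈ Fin n be such that for all v, a i v = a j v and a v i = a v j (nodes i and j have identical out- and in-neighborhoods). Then for every x : Fin n → ℝ and λ : ℝ with λ ≠ 0, x ≠ 0 and (a * aᵀ).mulVec x = λ • x, one has x i = x j; and likewise every eigenvector of aᵀ * a with nonzero eigenvalue satisfies x i = x j. -/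
open Matrix

/-- If nodes `i` and `j` have identical out- and in-neighborhoods in `a`, then every
eigenvector of `a * aᵀ` with nonzero eigenvalue satisfies `x i = x j`, and likewise
every eigenvector of `aᵀ * a` with nonzero eigenvalue satisfies `x i = x j`. -/
theorem stmt7 {n : ℕ} (a : Matrix (Fin n) (Fin n) ℝ) (i j : Fin n)
    (h : ∀ v, a i v = a j v ∧ a v i = a v j) :
    (∀ (x : Fin n → ℝ) (lam : ℝ), lam ≠ 0 → x ≠ 0 →
      (a * aᵀ).mulVec x = lam • x → x i = x j) ∧
    (∀ (x : Fin n → ℝ) (lam : ℝ), lam ≠ 0 → x ≠ 0 →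
      (aᵀ * a).mulVec x = lam • x → x i = x j) := by
  constructor
  · intro x lam hlam _ hx
    have hrow : (a * aᵀ).mulVec x i = (a * aᵀ).mulVec x j := by
      simp only [mulVec, dotProduct, mul_apply, transpose_apply]
      exact Finset.sum_congr rfl fun v _ => by congr 1; exact Finset.sum_congr rfl fun k _ => by rw [(h k).1]
    rw [hx] at hrow
    have : lam * x i = lam * x j := by simpa using congrArg id hrow
    exact mul_left_cancel₀ hlam this
  · intro x lam hlam _ hx
    have hrow : (aᵀ * a).mulVec x i = (aᵀ * a).mulVec x j := by
      simp only [mulVec, dotProduct, mul_apply, transpose_apply]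
      exact Finset.sum_congr rfl fun v _ => by congr 1; exact Finset.sum_congr rfl fun k _ => by rw [(h k).2]
    rw [hx] at hrow
    have : lam * x i = lam * x j := by simpa using congrArg id hrow
    exact mul_left_cancel₀ hlam this
end

section
/- Let a : Matrix (Fin n) (Fin n) ℝ be a binary matrix (every entry is 0 or 1) and let i ≠ j in Fin n. Then the following are equivalent: (1) every eigenvector x of a * aᵀ with nonzero eigenvalue satisfies x i = x j, and every eigenvector x of aᵀ * a with nonzero eigenvalue satisfies x i = x j; (2) for all v in Fin n, a i v = a j v and a v i = a v j. Moreover, if (2) holds, then the transposition τ swapping i and j is an automorphism of a (for all k, l: a (τ k) (τ l) = a k l), so i and j are isomorphic nodes. -/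
open Matrix

private lemma key8 {n : ℕ} (M : Matrix (Fin n) (Fin n) ℝ) (hM : M.IsHermitian)
    (i j : Fin n)
    (h : ∀ (x : Fin n → ℝ) (lam : ℝ), lam ≠ 0 → x ≠ 0 → M.mulVec x = lam • x → x i = x j)
    (w : Fin n → ℝ) : M.mulVec w i = M.mulVec w j := by
  classical
  set b := hM.eigenvectorBasis with hb
  have hw : w = ∑ k, b.repr (WithLp.toLp 2 w) k • (b k : Fin n → ℝ) := by
    have := congrArg WithLp.ofLp (b.sum_repr (WithLp.toLp 2 w))
    simpa using this.symm
  have hcomp : ∀ k : Fin n, (b.repr (WithLp.toLp 2 w) k * hM.eigenvalues k) * (b k : Fin n → ℝ) i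
      = (b.repr (WithLp.toLp 2 w) k * hM.eigenvalues k) * (b k : Fin n → ℝ) j := by
    intro k
    rcases eq_or_ne (hM.eigenvalues k) 0 with h0 | h0
    · simp [h0]
    · have := h (b k) (hM.eigenvalues k) h0
        (by simpa using b.orthonormal.ne_zero k) (hM.mulVec_eigenvectorBasis k)
      rw [this]
  calc M.mulVec w i = ∑ k, (b.repr (WithLp.toLp 2 w) k * hM.eigenvalues k) * (b k : Fin n → ℝ) i := by
        conv_lhs => rw [hw]
        rw [← mulVecLin_apply, map_sum]
        simp only [mulVecLin_apply, mulVec_smul, Finset.sum_apply, Pi.smul_apply, smul_eq_mul]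
        refine Finset.sum_congr rfl fun k _ => ?_
        rw [show M *ᵥ (b k : Fin n → ℝ) = hM.eigenvalues k • (b k : Fin n → ℝ) from hM.mulVec_eigenvectorBasis k]
        simp [mul_assoc]
    _ = ∑ k, (b.repr (WithLp.toLp 2 w) k * hM.eigenvalues k) * (b k : Fin n → ℝ) j :=
        Finset.sum_congr rfl fun k _ => hcomp k
    _ = M.mulVec w j := by
        conv_rhs => rw [hw]
        rw [← mulVecLin_apply, map_sum]
        simp only [mulVecLin_apply, mulVec_smul, Finset.sum_apply, Pi.smul_apply, smul_eq_mul]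
        refine (Finset.sum_congr rfl fun k _ => ?_).symm
        rw [show M *ᵥ (b k : Fin n → ℝ) = hM.eigenvalues k • (b k : Fin n → ℝ) from hM.mulVec_eigenvectorBasis k]
        simp [mul_assoc]

private lemma row8 {n : ℕ} (a : Matrix (Fin n) (Fin n) ℝ) (i j : Fin n) (hij : i ≠ j)
    (h : ∀ (x : Fin n → ℝ) (lam : ℝ), lam ≠ 0 → x ≠ 0 →
        (a * aᵀ).mulVec x = lam • x → x i = x j) :
    ∀ v, a i v = a j v := by
  classical
  set M := a * aᵀ with hMdef
  have hH : M.IsHermitian := by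
    ext k l
    simp only [hMdef, conjTranspose_apply, Matrix.mul_apply, transpose_apply, star_trivial]
    exact Finset.sum_congr rfl fun v _ => mul_comm _ _
  have hkey := key8 M hH i j h (Pi.single i 1 - Pi.single j 1)
  have hmv : ∀ k : Fin n, M.mulVec (Pi.single i 1 - Pi.single j 1) k = M k i - M k j := by
    intro k
    simp [Matrix.mulVec, dotProduct, Pi.single_apply, mul_sub, Finset.sum_sub_distrib,
      mul_ite, mul_one, mul_zero, Finset.sum_ite_eq, Finset.sum_ite_eq']
  rw [hmv i, hmv j] at hkey
  have hsym : M i j = M j i := by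
    simp only [hMdef, Matrix.mul_apply, transpose_apply]
    exact Finset.sum_congr rfl fun v _ => mul_comm _ _
  have hz : ∑ v, (a i v - a j v) ^ 2 = 0 := by
    have hexp : ∑ v, (a i v - a j v) ^ 2
        = (M i i - M j i) - (M i j - M j j) := by
      simp only [hMdef, Matrix.mul_apply, transpose_apply, ← Finset.sum_sub_distrib]
      exact Finset.sum_congr rfl fun v _ => by ring
    rw [hexp]; linarith [hkey, hsym]
  intro v
  have := (Finset.sum_eq_zero_iff_of_nonneg (fun v _ => sq_nonneg (a i v - a j v))).mp hz
    v (Finset.mem_univ v)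
  have := (pow_eq_zero_iff two_ne_zero).mp this
  linarith

/-- Theorem 4 of the paper (the invariances of SVD): for a binary adjacency matrix,
two distinct nodes `i ≠ j` get the same SVD embedding (all eigenvectors of the Gram
matrices `a * aᵀ` and `aᵀ * a` with nonzero eigenvalue take equal values at `i` and
`j`) if and only if they have the exact same neighborhood; moreover, in that case the
transposition swapping `i` and `j` is an automorphism of `a`, so `i` and `j` are
isomorphic nodes. -/
theorem stmt8 {n : ℕ} (a : Matrix (Fin n) (Fin n) ℝ) (ha : ∀ i j, a i j = 0 ∨ a i j = 1)
    (i j : Fin n) (hij : i ≠ j) :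
    (((∀ (x : Fin n → ℝ) (lam : ℝ), lam ≠ 0 → x ≠ 0 →
        (a * aᵀ).mulVec x = lam • x → x i = x j) ∧
      (∀ (x : Fin n → ℝ) (lam : ℝ), lam ≠ 0 → x ≠ 0 →
        (aᵀ * a).mulVec x = lam • x → x i = x j)) ↔
      (∀ v, a i v = a j v ∧ a v i = a v j)) ∧
    ((∀ v, a i v = a j v ∧ a v i = a v j) →
      ∀ k l, a (Equiv.swap i j k) (Equiv.swap i j l) = a k l) := by
  constructor
  · constructor
    · rintro ⟨h1, h2⟩ v
      refine ⟨row8 a i j hij h1 v, ?_⟩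
      have h2' : ∀ (x : Fin n → ℝ) (lam : ℝ), lam ≠ 0 → x ≠ 0 →
          (aᵀ * aᵀᵀ).mulVec x = lam • x → x i = x j := by
        simpa [transpose_transpose] using h2
      exact row8 aᵀ i j hij h2' v
    · intro h
      have hr : ∀ v, a i v = a j v := fun v => (h v).1
      have hc : ∀ v, a v i = a v j := fun v => (h v).2
      constructor
      · intro x lam hlam hx hev
        have hMeq : ∀ k, (a * aᵀ) i k = (a * aᵀ) j k := by
          intro k
          simp only [Matrix.mul_apply, transpose_apply]
          exact Finset.sum_congr rfl fun v _ => by rw [hr v]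
        have hmi : (a * aᵀ).mulVec x i = (a * aᵀ).mulVec x j := by
          simp only [Matrix.mulVec, dotProduct]
          exact Finset.sum_congr rfl fun k _ => by rw [hMeq k]
        rw [hev] at hmi
        simp only [Pi.smul_apply, smul_eq_mul] at hmi
        exact mul_left_cancel₀ hlam hmi
      · intro x lam hlam hx hev
        have hMeq : ∀ k, (aᵀ * a) i k = (aᵀ * a) j k := by
          intro k
          simp only [Matrix.mul_apply, transpose_apply]
          exact Finset.sum_congr rfl fun v _ => by rw [hc v]
        have hmi : (aᵀ * a).mulVec x i = (aᵀ * a).mulVec x j := by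
          simp only [Matrix.mulVec, dotProduct]
          exact Finset.sum_congr rfl fun k _ => by rw [hMeq k]
        rw [hev] at hmi
        simp only [Pi.smul_apply, smul_eq_mul] at hmi
        exact mul_left_cancel₀ hlam hmi
  · intro h k l
    have hr : ∀ v, a i v = a j v := fun v => (h v).1
    have hc : ∀ v, a v i = a v j := fun v => (h v).2
    have e1 : a i i = a j i := hr i
    have e2 : a i j = a j j := hr j
    have e3 : a i i = a i j := hc i
    have e4 : a j i = a j j := hc j
    rw [Equiv.swap_apply_def, Equiv.swap_apply_def]
    split_ifs <;> simp_all
end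

section
/- Let m be a natural number, a : Matrix (Fin m) (Fin m) Bool a symmetric matrix (a x y = a y x), and i, j ∈ Fin m with a i j = true. Define the disjoint-union adjacency b on the vertex set Fin m ⊕ Fin m by b (inl x) (inl y) = a x y, b (inr x) (inr y) = a x y, and b (inl x) (inr y) = b (inr x) (inl y) = false. Then: (1) the swap permutation σ of Fin m ⊕ Fin m exchanging inl x with inr x for all x is an automorphism of b, and the identity is an automorphism of b, so there exist automorphisms π, π' of b with π (inl i) = inl i and π' (inl j) = inr j; (2) there is no automorphism π* of b with π* (inl i) = inl i and π* (inl j) = inr j. Hence b is a pairwise symmetric graph with witnesses (inl i, inl j) and (inl i, inr j). -/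
/-- A permutation `π` of the vertex set is an automorphism of the adjacency
`b : V → V → Bool` if `b (π k) (π l) = b k l` for all `k, l`. -/
def IsAut {V : Type*} (b : V → V → Bool) (π : Equiv.Perm V) : Prop :=
  ∀ k l, b (π k) (π l) = b k l

/-- The disjoint union of a symmetric graph `a` (containing an edge `i j`) with a copy
of itself is pairwise symmetric: the component swap and the identity are automorphisms
(yielding automorphisms `π, π'` with `π (inl i) = inl i` and `π' (inl j) = inr j`), but
no single automorphism `π*` satisfies `π* (inl i) = inl i` and `π* (inl j) = inr j`. -/
theorem stmt10 {m : ℕ} (a : Matrix (Fin m) (Fin m) Bool) (hsymm : ∀ x y, a x y = a y x)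
    (i j : Fin m) (hij : a i j = true)
    (b : (Fin m ⊕ Fin m) → (Fin m ⊕ Fin m) → Bool)
    (hll : ∀ x y, b (Sum.inl x) (Sum.inl y) = a x y)
    (hrr : ∀ x y, b (Sum.inr x) (Sum.inr y) = a x y)
    (hlr : ∀ x y, b (Sum.inl x) (Sum.inr y) = false)
    (hrl : ∀ x y, b (Sum.inr x) (Sum.inl y) = false) :
    (IsAut b (Equiv.sumComm (Fin m) (Fin m)) ∧ IsAut b (Equiv.refl (Fin m ⊕ Fin m)) ∧
      ∃ π π' : Equiv.Perm (Fin m ⊕ Fin m), IsAut b π ∧ IsAut b π' ∧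
        π (Sum.inl i) = Sum.inl i ∧ π' (Sum.inl j) = Sum.inr j) ∧
    ¬ ∃ πstar : Equiv.Perm (Fin m ⊕ Fin m), IsAut b πstar ∧
        πstar (Sum.inl i) = Sum.inl i ∧ πstar (Sum.inl j) = Sum.inr j := by
  have hswap : IsAut b (Equiv.sumComm (Fin m) (Fin m)) := by
    intro k l
    cases k <;> cases l <;> simp [hll, hrr, hlr, hrl]
  refine ⟨⟨hswap, fun k l => rfl,
    Equiv.refl _, Equiv.sumComm _ _, fun k l => rfl, hswap, rfl, rfl⟩, ?_⟩
  rintro ⟨π, haut, h1, h2⟩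
  have := haut (Sum.inl i) (Sum.inl j)
  rw [h1, h2, hlr, hll, hij] at this
  exact Bool.false_ne_true this
end
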